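/- arXiv:1807.08295 — 2 statements merged into one kernel-verified Lean document; each statement's English description precedes it below -/
import Mathlib

section
/- Let G be a disconnected graph with exactly one nontrivial connected component G_1 and t > 0 trivial components. If diam(G_1) ≤ 3, then h(G\bar{G}) ≤ h(G_1) + t, where h denotes the geodetic hull number. -/
open SimpleGraph

/-- The geodetic closed interval `I[u,v]`: `u`, `v`, and all vertices lying on
some shortest `u`–`v` path. -/
def geoInterval {V : Type*} (G : SimpleGraph V) (u v : V) : Set V :=
  {w | w = u ∨ w = v ∨ (G.Reachable u v ∧ G.dist u w + G.dist w v = G.dist u v)}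

/-- A set is geodetically convex if it is closed under intervals. -/
def IsGeoConvex {V : Type*} (G : SimpleGraph V) (S : Set V) : Prop :=
  ∀ u ∈ S, ∀ v ∈ S, geoInterval G u v ⊆ S

/-- The geodetic convex hull: the smallest convex set containing `S`. -/
def geoHull {V : Type*} (G : SimpleGraph V) (S : Set V) : Set V :=
  ⋂₀ {T | IsGeoConvex G T ∧ S ⊆ T}

/-- `S` is a hull set if its convex hull is the whole vertex set. -/
def IsHullSet {V : Type*} (G : SimpleGraph V) (S : Set V) : Prop :=
  geoHull G S = Set.univ

/-- The geodetic hull number: minimum cardinality of a hull set. -/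
noncomputable def hullNumber {V : Type*} (G : SimpleGraph V) : ℕ :=
  sInf {n | ∃ S : Set V, S.ncard = n ∧ IsHullSet G S}

/-- A vertex is simplicial if its closed neighborhood induces a clique. -/
def IsSimplicial {V : Type*} (G : SimpleGraph V) (v : V) : Prop :=
  ∀ a ∈ G.neighborSet v, ∀ b ∈ G.neighborSet v, a ≠ b → G.Adj a b

/-- The complementary prism `G G̅`: disjoint union of `G` (left copies) and its
complement (right copies), plus a perfect matching between corresponding vertices. -/
def compPrism {V : Type*} (G : SimpleGraph V) : SimpleGraph (V ⊕ V) where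
  Adj x y :=
    match x, y with
    | .inl u, .inl w => G.Adj u w
    | .inr u, .inr w => u ≠ w ∧ ¬ G.Adj u w
    | .inl u, .inr w => u = w
    | .inr u, .inl w => u = w
  symm := by
    refine ⟨?_⟩
    rintro (u | u) (w | w) h
    · exact h.symm
    · exact h.symm
    · exact h.symm
    · exact ⟨h.1.symm, fun a => h.2 a.symm⟩
  loopless := by
    refine ⟨?_⟩
    rintro (u | u) h
    · exact G.irrefl h
    · exact h.1 rfl

namespace CPaux

variable {V : Type*} {G : SimpleGraph V}

lemma subset_geoHull (S : Set V) : S ⊆ geoHull G S :=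
  fun _x hx _T hT => hT.2 hx

lemma isGeoConvex_geoHull (S : Set V) : IsGeoConvex G (geoHull G S) := by
  intro u hu v hv w hw T hT
  exact hT.1 u (hu T hT) v (hv T hT) hw

lemma geoHull_min {S T : Set V} (hc : IsGeoConvex G T) (hs : S ⊆ T) :
    geoHull G S ⊆ T :=
  Set.sInter_subset_of_mem ⟨hc, hs⟩

lemma isHullSet_univ : IsHullSet G Set.univ :=
  Set.univ_subset_iff.mp (subset_geoHull _)

/-- The left-copy homomorphism into the complementary prism. -/
def homInl (G : SimpleGraph V) : G →g compPrism G where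
  toFun := Sum.inl
  map_rel' := fun h => h

open Classical in
/-- Lower bound function for distances to `inl v` in the complementary prism. -/
noncomputable def lb (G : SimpleGraph V) (v : V) : V ⊕ V → ℕ
  | Sum.inl w => if G.Reachable w v then min (G.dist w v) 3 else 3
  | Sum.inr w => if w = v then 1 else 2

lemma lb_adj {v : V} {x y : V ⊕ V} (h : (compPrism G).Adj x y) :
    lb G v x ≤ lb G v y + 1 := by
  classical
  rcases x with w | w <;> rcases y with w' | w'
  · -- inl, inl : G.Adj w w'
    have hadj : G.Adj w w' := h
    by_cases hr : G.Reachable w v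
    · have hr' : G.Reachable w' v := hadj.symm.reachable.trans hr
      obtain ⟨p, hp⟩ := hr'.exists_walk_length_eq_dist
      have hd : G.dist w v ≤ G.dist w' v + 1 := by
        have := SimpleGraph.dist_le (SimpleGraph.Walk.cons hadj p)
        simpa [hp, Nat.add_comm] using this
      simp only [lb, if_pos hr, if_pos hr']
      omega
    · have hr' : ¬ G.Reachable w' v := fun hh => hr (hadj.reachable.trans hh)
      simp [lb, if_neg hr, if_neg hr']
  · -- inl w, inr w' with w = w'
    have hw : w = w' := h
    subst hw
    by_cases hv : w = v
    · subst hv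
      have : G.Reachable w w := SimpleGraph.Reachable.refl w
      simp [lb, SimpleGraph.dist_self, this]
    · simp only [lb, if_neg hv]
      split <;> omega
  · -- inr w, inl w' with w = w'
    have hw : w = w' := h
    subst hw
    by_cases hv : w = v
    · subst hv
      have : G.Reachable w w := SimpleGraph.Reachable.refl w
      simp [lb, SimpleGraph.dist_self, this]
    · by_cases hr : G.Reachable w v
      · have : 0 < G.dist w v := hr.pos_dist_of_ne hv
        simp only [lb, if_neg hv, if_pos hr]
        omega
      · simp [lb, if_neg hv, if_neg hr]
  · -- inr, inr
    simp only [lb]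
    split <;> split <;> omega

lemma lb_le_length_aux {v : V} : ∀ {x y : V ⊕ V} (p : (compPrism G).Walk x y),
    y = Sum.inl v → lb G v x ≤ p.length := by
  intro x y p
  induction p with
  | nil =>
      rintro rfl
      have : G.Reachable v v := SimpleGraph.Reachable.refl v
      simp [lb, SimpleGraph.dist_self, this]
  | cons h q ih =>
      rintro rfl
      have h1 := lb_adj (v := v) h
      have h2 := ih rfl
      simp only [SimpleGraph.Walk.length_cons]
      omega

lemma lb_le_length {v : V} {x : V ⊕ V} (p : (compPrism G).Walk x (Sum.inl v)) :
    lb G v x ≤ p.length := lb_le_length_aux p rfl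

lemma lb_le_dist {v : V} {x : V ⊕ V} (hr : (compPrism G).Reachable x (Sum.inl v)) :
    lb G v x ≤ (compPrism G).dist x (Sum.inl v) := by
  obtain ⟨p, hp⟩ := hr.exists_walk_length_eq_dist
  exact hp ▸ lb_le_length p

lemma walk_supp {C : G.ConnectedComponent} :
    ∀ {a b : V} (p : G.Walk a b), a ∈ C.supp → ∀ x ∈ p.support, x ∈ C.supp := by
  intro a b p
  induction p with
  | nil =>
      intro ha x hx
      simp only [SimpleGraph.Walk.support_nil, List.mem_singleton] at hx
      exact hx ▸ ha
  | @cons a c b h q ih =>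
      intro ha x hx
      have hc : c ∈ C.supp := by
        rw [SimpleGraph.ConnectedComponent.mem_supp_iff] at ha ⊢
        rw [← ha]
        exact (SimpleGraph.ConnectedComponent.connectedComponentMk_eq_of_adj h).symm
      simp only [SimpleGraph.Walk.support_cons, List.mem_cons] at hx
      rcases hx with rfl | hx
      · exact ha
      · exact ih hc x hx

lemma exists_induced_walk {s : Set V} :
    ∀ {a b : V} (p : G.Walk a b) (_hp : ∀ x ∈ p.support, x ∈ s) (ha : a ∈ s) (hb : b ∈ s),
      ∃ q : (G.induce s).Walk ⟨a, ha⟩ ⟨b, hb⟩, q.length = p.length := by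
  intro a b p
  induction p with
  | nil => intro _ ha hb; exact ⟨.nil, rfl⟩
  | @cons a c b h q ih =>
      intro hp ha hb
      have hc : c ∈ s := hp c (by simp)
      obtain ⟨q', hq'⟩ := ih (fun x hx => hp x (by simp [hx])) hc hb
      exact ⟨.cons (show (G.induce s).Adj ⟨a, ha⟩ ⟨c, hc⟩ from h) q', by simp [hq']⟩

end CPaux

theorem hullNumber_compPrism_one_nontrivial_ub_diam_le_three {V : Type*} [Fintype V]
    (G : SimpleGraph V) (t : ℕ) (hdisc : ¬ G.Connected)
    (C₁ : G.ConnectedComponent) (hC₁ : C₁.supp.Nontrivial)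
    (huniq : ∀ C : G.ConnectedComponent, C.supp.Nontrivial → C = C₁)
    (ht : t = Nat.card {C : G.ConnectedComponent // ¬ C.supp.Nontrivial})
    (ht0 : 0 < t)
    (hdiam : ∀ u v : C₁.supp, (G.induce C₁.supp).dist u v ≤ 3) :
    hullNumber (compPrism G) ≤ hullNumber (G.induce C₁.supp) + t := by
  classical
  open CPaux in
  set H := compPrism G with hH
  set I := G.induce C₁.supp with hI
  -- reachability inside the component
  have reachG : ∀ a b : ↥C₁.supp, G.Reachable ↑a ↑b := by
    intro a b
    have ha := a.2; have hb := b.2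
    rw [SimpleGraph.ConnectedComponent.mem_supp_iff] at ha hb
    exact SimpleGraph.ConnectedComponent.exact (ha.trans hb.symm)
  have distIG : ∀ a b : ↥C₁.supp, I.dist a b = G.dist ↑a ↑b := by
    intro a b
    obtain ⟨p, hp⟩ := (reachG a b).exists_walk_length_eq_dist
    have hsupp := CPaux.walk_supp p a.2
    obtain ⟨q, hq⟩ := CPaux.exists_induced_walk p hsupp a.2 b.2
    have hq' : I.dist a b ≤ G.dist ↑a ↑b := by
      have h1 : I.dist a b ≤ q.length := SimpleGraph.dist_le q
      omega
    have hreachI : I.Reachable a b := ⟨q⟩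
    obtain ⟨r, hr⟩ := hreachI.exists_walk_length_eq_dist
    have : G.dist ↑a ↑b ≤ I.dist a b := by
      have := SimpleGraph.dist_le (r.map (SimpleGraph.Embedding.induce C₁.supp).toHom)
      rwa [SimpleGraph.Walk.length_map, hr] at this
    omega
  have distG3 : ∀ a b : ↥C₁.supp, G.dist ↑a ↑b ≤ 3 := by
    intro a b; rw [← distIG a b]; exact hdiam a b
  have reachH : ∀ a b : ↥C₁.supp, H.Reachable (Sum.inl ↑a) (Sum.inl ↑b) :=
    fun a b => (reachG a b).map (CPaux.homInl G)
  have distH : ∀ a b : ↥C₁.supp, H.dist (Sum.inl ↑a) (Sum.inl ↑b) = G.dist ↑a ↑b := by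
    intro a b
    obtain ⟨p, hp⟩ := (reachG a b).exists_walk_length_eq_dist
    have hle : H.dist (Sum.inl ↑a) (Sum.inl ↑b) ≤ G.dist ↑a ↑b := by
      have := SimpleGraph.dist_le (p.map (CPaux.homInl G))
      rwa [SimpleGraph.Walk.length_map, hp] at this
    have hge : CPaux.lb G ↑b (Sum.inl ↑a) ≤ H.dist (Sum.inl ↑a) (Sum.inl ↑b) :=
      CPaux.lb_le_dist (reachH a b)
    have hlb : CPaux.lb G ↑b (Sum.inl ↑a) = G.dist ↑a ↑b := by
      simp only [CPaux.lb, if_pos (reachG a b)]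
      exact min_eq_left (distG3 a b)
    omega
  -- the set of vertices in trivial components
  set Z : Set V := {w : V | ¬ (G.connectedComponentMk w).supp.Nontrivial} with hZ
  have hZC : ∀ z ∈ Z, z ∉ C₁.supp := by
    intro z hz hzc
    rw [SimpleGraph.ConnectedComponent.mem_supp_iff] at hzc
    exact hz (hzc ▸ hC₁)
  have hnreach : ∀ z ∈ Z, ∀ u : ↥C₁.supp, ¬ G.Reachable z ↑u := by
    intro z hz u hr
    apply hZC z hz
    rw [SimpleGraph.ConnectedComponent.mem_supp_iff]
    have hu := u.2
    rw [SimpleGraph.ConnectedComponent.mem_supp_iff] at hu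
    exact (SimpleGraph.ConnectedComponent.sound hr).trans hu
  have hnadj : ∀ z ∈ Z, ∀ u : ↥C₁.supp, ¬ G.Adj z ↑u :=
    fun z hz u ha => hnreach z hz u ha.reachable
  have hne : ∀ z ∈ Z, ∀ u : ↥C₁.supp, z ≠ ↑u := by
    rintro z hz u rfl
    exact hnreach _ hz u (SimpleGraph.Reachable.refl _)
  -- key walks and distances between a trivial vertex and a component vertex
  have key : ∀ z ∈ Z, ∀ u : ↥C₁.supp,
      Sum.inr z ∈ geoInterval H (Sum.inl z) (Sum.inl ↑u) ∧
      Sum.inr (u : V) ∈ geoInterval H (Sum.inl z) (Sum.inl ↑u) := by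
    intro z hz u
    have e1 : H.Adj (Sum.inl z) (Sum.inr z) := rfl
    have e2 : H.Adj (Sum.inr z) (Sum.inr ↑u) := ⟨hne z hz u, hnadj z hz u⟩
    have e3 : H.Adj (Sum.inr ↑u) (Sum.inl ↑u) := rfl
    have hreach : H.Reachable (Sum.inl z) (Sum.inl ↑u) :=
      ⟨.cons e1 (.cons e2 (.cons e3 .nil))⟩
    have d3 : H.dist (Sum.inl z) (Sum.inl ↑u) = 3 := by
      have hle : H.dist (Sum.inl z) (Sum.inl ↑u) ≤
          (SimpleGraph.Walk.cons e1 (.cons e2 (.cons e3 .nil))).length :=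
        SimpleGraph.dist_le _
      have hge : CPaux.lb G ↑u (Sum.inl z) ≤ H.dist (Sum.inl z) (Sum.inl ↑u) :=
        CPaux.lb_le_dist hreach
      have hlb : CPaux.lb G ↑u (Sum.inl z) = 3 := by
        simp only [CPaux.lb, if_neg (hnreach z hz u)]
      simp only [SimpleGraph.Walk.length_cons, SimpleGraph.Walk.length_nil] at hle
      omega
    have d1 : H.dist (Sum.inl z) (Sum.inr z) = 1 :=
      SimpleGraph.dist_eq_one_iff_adj.mpr e1
    have d2 : H.dist (Sum.inr z) (Sum.inl ↑u) = 2 := by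
      have hle : H.dist (Sum.inr z) (Sum.inl ↑u) ≤
          (SimpleGraph.Walk.cons e2 (.cons e3 .nil)).length :=
        SimpleGraph.dist_le _
      have hge : CPaux.lb G ↑u (Sum.inr z) ≤ H.dist (Sum.inr z) (Sum.inl ↑u) :=
        CPaux.lb_le_dist (⟨SimpleGraph.Walk.cons e2 (.cons e3 .nil)⟩ :
          H.Reachable (Sum.inr z) (Sum.inl ↑u))
      have hlb : CPaux.lb G ↑u (Sum.inr z) = 2 := by
        simp only [CPaux.lb, if_neg (hne z hz u)]
      simp only [SimpleGraph.Walk.length_cons, SimpleGraph.Walk.length_nil] at hle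
      omega
    have d2' : H.dist (Sum.inl z) (Sum.inr ↑u) = 2 := by
      have hle : H.dist (Sum.inl z) (Sum.inr ↑u) ≤
          (SimpleGraph.Walk.cons e1 (.cons e2 .nil)).length :=
        SimpleGraph.dist_le _
      have hne0 : H.dist (Sum.inl z) (Sum.inr ↑u) ≠ 0 := by
        rw [SimpleGraph.dist_ne_zero_iff_ne_and_reachable]
        exact ⟨by simp, ⟨SimpleGraph.Walk.cons e1 (.cons e2 .nil)⟩⟩
      have hne1 : H.dist (Sum.inl z) (Sum.inr ↑u) ≠ 1 := by
        intro h
        have : H.Adj (Sum.inl z) (Sum.inr ↑u) := SimpleGraph.dist_eq_one_iff_adj.mp h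
        exact hne z hz u this
      simp only [SimpleGraph.Walk.length_cons, SimpleGraph.Walk.length_nil] at hle
      omega
    have d1' : H.dist (Sum.inr ↑u) (Sum.inl ↑u) = 1 :=
      SimpleGraph.dist_eq_one_iff_adj.mpr e3
    constructor
    · exact Or.inr (Or.inr ⟨hreach, by rw [d1, d2, d3]⟩)
    · exact Or.inr (Or.inr ⟨hreach, by rw [d2', d1', d3]⟩)
  -- extract a minimum hull set of the induced component
  have hne' : {n | ∃ S : Set ↥C₁.supp, S.ncard = n ∧ IsHullSet I S}.Nonempty :=
    ⟨(Set.univ : Set ↥C₁.supp).ncard, Set.univ, rfl, CPaux.isHullSet_univ⟩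
  have hmem : ∃ S : Set ↥C₁.supp, S.ncard = hullNumber I ∧ IsHullSet I S :=
    Nat.sInf_mem hne'
  obtain ⟨S₁, hS₁card, hS₁⟩ := hmem
  -- the candidate hull set
  set S : Set (V ⊕ V) := Sum.inl '' (Subtype.val '' S₁ ∪ Z) with hS
  set M := geoHull H S with hM
  have hSM : S ⊆ M := CPaux.subset_geoHull S
  have hMconv := CPaux.isGeoConvex_geoHull (G := H) S
  have step1 : ∀ a : ↥C₁.supp, Sum.inl (a : V) ∈ M := by
    have hTconv : IsGeoConvex I {a : ↥C₁.supp | Sum.inl (a : V) ∈ M} := by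
      intro u hu v hv w hw
      rcases hw with rfl | rfl | ⟨hre, hsum⟩
      · exact hu
      · exact hv
      · have hint : Sum.inl (w : V) ∈ geoInterval H (Sum.inl ↑u) (Sum.inl ↑v) := by
          refine Or.inr (Or.inr ⟨reachH u v, ?_⟩)
          rw [distH u w, distH w v, distH u v, ← distIG u w, ← distIG w v, ← distIG u v]
          exact hsum
        exact hMconv _ hu _ hv hint
    have hT1 : Set.univ ⊆ {a : ↥C₁.supp | Sum.inl (a : V) ∈ M} := by
      rw [← hS₁]
      exact CPaux.geoHull_min hTconv (fun a ha => hSM ⟨_, Or.inl ⟨a, ha, rfl⟩, rfl⟩)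
    exact fun a => hT1 (Set.mem_univ a)
  have hinlZ : ∀ z ∈ Z, Sum.inl z ∈ M := fun z hz => hSM ⟨z, Or.inr hz, rfl⟩
  have step2 : ∀ z ∈ Z, ∀ u : ↥C₁.supp,
      Sum.inr z ∈ M ∧ Sum.inr (u : V) ∈ M := by
    intro z hz u
    obtain ⟨h1, h2⟩ := key z hz u
    exact ⟨hMconv _ (hinlZ z hz) _ (step1 u) h1,
      hMconv _ (hinlZ z hz) _ (step1 u) h2⟩
  -- some trivial-component vertex exists
  have hzex : ∃ z, z ∈ Z := by
    have : 0 < Nat.card {C : G.ConnectedComponent // ¬ C.supp.Nontrivial} := ht ▸ ht0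
    have hne'' : Nonempty {C : G.ConnectedComponent // ¬ C.supp.Nontrivial} :=
      (Nat.card_pos_iff.mp this).1
    obtain ⟨⟨C, hC⟩⟩ := hne''
    obtain ⟨z, hzC'⟩ := C.exists_rep
    have hzC : G.connectedComponentMk z = C := hzC'
    exact ⟨z, by rw [hZ, Set.mem_setOf_eq, hzC]; exact hC⟩
  obtain ⟨z₀, hz₀⟩ := hzex
  -- S is a hull set
  have hhull : IsHullSet H S := by
    apply Set.eq_univ_of_forall
    rintro (w | w)
    · by_cases hw : (G.connectedComponentMk w).supp.Nontrivial
      · have : w ∈ C₁.supp :=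
          (SimpleGraph.ConnectedComponent.mem_supp_iff _ _).mpr (huniq _ hw)
        exact step1 ⟨w, this⟩
      · exact hinlZ w hw
    · by_cases hw : (G.connectedComponentMk w).supp.Nontrivial
      · have : w ∈ C₁.supp :=
          (SimpleGraph.ConnectedComponent.mem_supp_iff _ _).mpr (huniq _ hw)
        exact (step2 z₀ hz₀ ⟨w, this⟩).2
      · obtain ⟨u₀, hu₀⟩ := hC₁.nonempty
        exact (step2 w hw ⟨u₀, hu₀⟩).1
  -- cardinality computation
  have hdisj : Disjoint (Subtype.val '' S₁) Z := by
    rw [Set.disjoint_left]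
    rintro a ⟨x, _, rfl⟩ haZ
    exact hZC _ haZ x.2
  have hZt : Z.ncard = t := by
    rw [← Nat.card_coe_set_eq, ht]
    apply Nat.card_congr
    refine Equiv.ofBijective (fun z => ⟨G.connectedComponentMk z.1, z.2⟩) ⟨?_, ?_⟩
    · rintro ⟨z, hz⟩ ⟨z', hz'⟩ h
      have hmk : G.connectedComponentMk z = G.connectedComponentMk z' :=
        congrArg Subtype.val h
      have hsub : (G.connectedComponentMk z).supp.Subsingleton :=
        Set.not_nontrivial_iff.mp hz
      have h1 : z ∈ (G.connectedComponentMk z).supp :=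
        (SimpleGraph.ConnectedComponent.mem_supp_iff _ _).mpr rfl
      have h2 : z' ∈ (G.connectedComponentMk z).supp :=
        (SimpleGraph.ConnectedComponent.mem_supp_iff _ _).mpr hmk.symm
      exact Subtype.ext (hsub h1 h2)
    · rintro ⟨C, hC⟩
      obtain ⟨z, hzC'⟩ := C.exists_rep
      have hzC : G.connectedComponentMk z = C := hzC'
      exact ⟨⟨z, by rw [hZ, Set.mem_setOf_eq, hzC]; exact hC⟩, Subtype.ext hzC⟩
  have hcard : S.ncard = hullNumber I + t := by
    rw [hS, Set.ncard_image_of_injective _ Sum.inl_injective,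
      Set.ncard_union_eq hdisj (Set.toFinite _) (Set.toFinite _),
      Set.ncard_image_of_injective _ Subtype.val_injective, hS₁card, hZt]
  have hfin : hullNumber H ≤ S.ncard := Nat.sInf_le ⟨S, rfl, hhull⟩
  rw [hcard] at hfin
  exact hfin
end

section
/- Let G be a disconnected graph with exactly one nontrivial connected component G_1 and t > 0 trivial components. If diam(G_1) > 3, then h(G\bar{G}) ≤ t + 2, where h denotes the geodetic hull number. -/
open SimpleGraph

namespace CPAux

variable {W : Type*} {H : SimpleGraph W}

lemma dist_triangle' {u v w : W} (h1 : H.Reachable u v) (h2 : H.Reachable v w) :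
    H.dist u w ≤ H.dist u v + H.dist v w := by
  obtain ⟨p, hp⟩ := h1.exists_walk_length_eq_dist
  obtain ⟨q, hq⟩ := h2.exists_walk_length_eq_dist
  rw [← hp, ← hq, ← SimpleGraph.Walk.length_append]
  apply SimpleGraph.dist_le

lemma dist_eq_two' {u v c : W} (hne : u ≠ v) (hnadj : ¬H.Adj u v)
    (h1 : H.Adj u c) (h2 : H.Adj c v) : H.dist u v = 2 := by
  have hle : H.dist u v ≤ 2 := by
    have := SimpleGraph.dist_le (SimpleGraph.Walk.cons h1 (SimpleGraph.Walk.cons h2 SimpleGraph.Walk.nil))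
    simpa using this
  have hr : H.Reachable u v := h1.reachable.trans h2.reachable
  have h0 : H.dist u v ≠ 0 := by
    simp [SimpleGraph.dist_eq_zero_iff_eq_or_not_reachable, hne, hr]
  have h1' : H.dist u v ≠ 1 := by
    simp [SimpleGraph.dist_eq_one_iff_adj, hnadj]
  omega

lemma exists_common_of_dist_eq_two {u v : W} (h : H.dist u v = 2) :
    ∃ c, H.Adj u c ∧ H.Adj c v := by
  obtain ⟨p, hp⟩ := SimpleGraph.exists_walk_of_dist_ne_zero (by omega : H.dist u v ≠ 0)
  rw [h] at hp
  cases p with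
  | nil => simp at hp
  | cons h1 q =>
    cases q with
    | nil => simp at hp
    | cons h2 r =>
      cases r with
      | nil => exact ⟨_, h1, h2⟩
      | cons h3 s => simp [SimpleGraph.Walk.length_cons] at hp

lemma dist_eq_three' {u v a b : W} (hne : u ≠ v) (hnadj : ¬H.Adj u v)
    (hnc : ∀ c, ¬(H.Adj u c ∧ H.Adj c v))
    (h1 : H.Adj u a) (h2 : H.Adj a b) (h3 : H.Adj b v) : H.dist u v = 3 := by
  have hle : H.dist u v ≤ 3 := by
    have := SimpleGraph.dist_le
      (SimpleGraph.Walk.cons h1 (SimpleGraph.Walk.cons h2 (SimpleGraph.Walk.cons h3 SimpleGraph.Walk.nil)))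
    simpa using this
  have hr : H.Reachable u v := (h1.reachable.trans h2.reachable).trans h3.reachable
  have h0 : H.dist u v ≠ 0 := by
    simp [SimpleGraph.dist_eq_zero_iff_eq_or_not_reachable, hne, hr]
  have h1' : H.dist u v ≠ 1 := by
    simp [SimpleGraph.dist_eq_one_iff_adj, hnadj]
  have h2' : H.dist u v ≠ 2 := by
    intro hc
    obtain ⟨c, hc1, hc2⟩ := exists_common_of_dist_eq_two hc
    exact hnc c ⟨hc1, hc2⟩
  omega

lemma exists_adj_dist_succ {u v : W} (h : 1 ≤ H.dist u v) :
    ∃ x, H.Adj u x ∧ H.dist x v + 1 = H.dist u v := by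
  obtain ⟨p, hp⟩ := SimpleGraph.exists_walk_of_dist_ne_zero (by omega : H.dist u v ≠ 0)
  cases p with
  | nil => rw [← hp] at h; simp at h
  | @cons _ x _ hadj q =>
    refine ⟨x, hadj, ?_⟩
    have hq : H.dist x v ≤ q.length := SimpleGraph.dist_le q
    have ht : H.dist u v ≤ H.dist u x + H.dist x v :=
      dist_triangle' hadj.reachable q.reachable
    have h1 : H.dist u x ≤ 1 := (SimpleGraph.dist_eq_one_iff_adj.mpr hadj).le
    rw [SimpleGraph.Walk.length_cons] at hp
    omega

lemma induce_walk_exists {V : Type*} {G : SimpleGraph V} {s : Set V}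
    (hcl : ∀ ⦃x y : V⦄, x ∈ s → G.Adj x y → y ∈ s) :
    ∀ {x y : V} (p : G.Walk x y) (hx : x ∈ s) (hy : y ∈ s),
      ∃ q : (G.induce s).Walk ⟨x, hx⟩ ⟨y, hy⟩, q.length = p.length := by
  intro x y p
  induction p with
  | nil => intro hx hy; exact ⟨SimpleGraph.Walk.nil, rfl⟩
  | @cons a b c hadj q ih =>
    intro hx hy
    have hb : b ∈ s := hcl hx hadj
    obtain ⟨q', hq'⟩ := ih hb hy
    have hadj' : (G.induce s).Adj ⟨a, hx⟩ ⟨b, hb⟩ := hadj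
    exact ⟨SimpleGraph.Walk.cons hadj' q', by simp [hq']⟩

end CPAux

namespace CPAux

variable {V : Type*} {G : SimpleGraph V}

@[simp] lemma cp_adj_ll {x y : V} : (compPrism G).Adj (.inl x) (.inl y) ↔ G.Adj x y := Iff.rfl
@[simp] lemma cp_adj_rr {x y : V} : (compPrism G).Adj (.inr x) (.inr y) ↔ x ≠ y ∧ ¬ G.Adj x y := Iff.rfl
@[simp] lemma cp_adj_lr {x y : V} : (compPrism G).Adj (.inl x) (.inr y) ↔ x = y := Iff.rfl
@[simp] lemma cp_adj_rl {x y : V} : (compPrism G).Adj (.inr x) (.inl y) ↔ x = y := Iff.rfl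

lemma cp_dist_lr {x y : V} (h : x ≠ y) : (compPrism G).dist (.inl x) (.inr y) = 2 := by
  by_cases hadj : G.Adj x y
  · exact dist_eq_two' (by simp) (by simp [h]) (c := .inl y) (by simp [hadj]) (by simp)
  · exact dist_eq_two' (by simp) (by simp [h]) (c := .inr x) (by simp) (by simp [h, hadj])

lemma cp_dist_ll_two {x y c : V} (hne : x ≠ y) (hnadj : ¬ G.Adj x y)
    (h1 : G.Adj x c) (h2 : G.Adj c y) : (compPrism G).dist (.inl x) (.inl y) = 2 :=
  dist_eq_two' (by simp [hne]) (by simp [hnadj]) (c := .inl c) (by simp [h1]) (by simp [h2])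

lemma cp_dist_ll_three {x y : V} (hne : x ≠ y) (hnadj : ¬ G.Adj x y)
    (hnc : ∀ c, ¬(G.Adj x c ∧ G.Adj c y)) : (compPrism G).dist (.inl x) (.inl y) = 3 := by
  refine dist_eq_three' (by simp [hne]) (by simp [hnadj]) ?_
    (a := .inr x) (b := .inr y) (by simp) (by simp [hne, hnadj]) (by simp)
  rintro (c | c) ⟨h1, h2⟩
  · exact hnc c ⟨h1, h2⟩
  · simp only [cp_adj_lr, cp_adj_rl] at h1 h2
    exact hne (h1.trans h2)

lemma cp_dist_rr_two {x y w : V} (hadj : G.Adj x y)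
    (hw : ∀ z, ¬ G.Adj w z) : (compPrism G).dist (.inr x) (.inr y) = 2 := by
  have hxw : x ≠ w := fun h => hw y (h ▸ hadj)
  have hyw : y ≠ w := fun h => hw x (h ▸ hadj.symm)
  exact dist_eq_two' (by simp [hadj.ne]) (by simp [hadj]) (c := .inr w)
    (by simp only [cp_adj_rr]; exact ⟨hxw, fun h => hw x h.symm⟩)
    (by simp only [cp_adj_rr]; exact ⟨hyw.symm, hw y⟩)

end CPAux

open CPAux in
theorem hullNumber_compPrism_one_nontrivial_ub_diam_gt_three {V : Type*} [Fintype V]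
    (G : SimpleGraph V) (t : ℕ) (hdisc : ¬ G.Connected)
    (C₁ : G.ConnectedComponent) (hC₁ : C₁.supp.Nontrivial)
    (huniq : ∀ C : G.ConnectedComponent, C.supp.Nontrivial → C = C₁)
    (ht : t = Nat.card {C : G.ConnectedComponent // ¬ C.supp.Nontrivial})
    (ht0 : 0 < t)
    (hdiam : ∃ u v : C₁.supp, 3 < (G.induce C₁.supp).dist u v) :
    hullNumber (compPrism G) ≤ t + 2 := by
  classical
  obtain ⟨u, v, hduv⟩ := hdiam
  have hcl : ∀ ⦃x y : V⦄, x ∈ C₁.supp → G.Adj x y → y ∈ C₁.supp := by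
    intro x y hx hxy
    rw [ConnectedComponent.mem_supp_iff] at hx ⊢
    rw [← hx]
    exact ConnectedComponent.sound hxy.reachable.symm
  have hiso : ∀ z, z ∉ C₁.supp → ∀ y, ¬ G.Adj z y := by
    intro z hz y hzy
    have hzsupp : z ∈ (G.connectedComponentMk z).supp := by
      rw [ConnectedComponent.mem_supp_iff]
    have hysupp : y ∈ (G.connectedComponentMk z).supp := by
      rw [ConnectedComponent.mem_supp_iff]
      exact (ConnectedComponent.sound hzy.reachable).symm
    have hne : G.connectedComponentMk z ≠ C₁ := by
      intro h
      exact hz ((ConnectedComponent.mem_supp_iff C₁ z).mpr h)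
    have hnt : ¬ (G.connectedComponentMk z).supp.Nontrivial := fun h => hne (huniq _ h)
    have heq : z = y := (Set.not_nontrivial_iff.mp hnt) hzsupp hysupp
    rw [heq] at hzy
    exact G.irrefl hzy
  have hruv : G.Reachable (u : V) (v : V) := ConnectedComponent.exact
    (((C₁.mem_supp_iff (u : V)).mp u.2).trans (((C₁.mem_supp_iff (v : V)).mp v.2).symm))
  have hd4 : 4 ≤ G.dist (u : V) (v : V) := by
    by_contra hlt
    push_neg at hlt
    obtain ⟨p, hp⟩ := hruv.exists_walk_length_eq_dist
    obtain ⟨q, hq⟩ := induce_walk_exists hcl p u.2 v.2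
    have h5 : (G.induce C₁.supp).dist ⟨(u : V), u.2⟩ ⟨(v : V), v.2⟩ ≤ q.length :=
      SimpleGraph.dist_le q
    rw [hq, hp] at h5
    have h6 : (G.induce C₁.supp).dist u v ≤ G.dist (u : V) (v : V) := h5
    omega
  obtain ⟨v0, m0, b, hd0, hr0b⟩ :
      ∃ v0 ∈ C₁.supp, ∃ b, 4 ≤ G.dist v0 b ∧ G.Reachable v0 b :=
    ⟨u, u.2, v, hd4, hruv⟩
  -- build the geodesic chain
  obtain ⟨v1, a01, hd1⟩ := exists_adj_dist_succ (show 1 ≤ G.dist v0 b by omega)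
  have hr1b : G.Reachable v1 b := a01.symm.reachable.trans hr0b
  obtain ⟨v2, a12, hd2⟩ := exists_adj_dist_succ (show 1 ≤ G.dist v1 b by omega)
  have hr2b : G.Reachable v2 b := a12.symm.reachable.trans hr1b
  obtain ⟨v3, a23, hd3⟩ := exists_adj_dist_succ (show 1 ≤ G.dist v2 b by omega)
  have hr3b : G.Reachable v3 b := a23.symm.reachable.trans hr2b
  obtain ⟨v4, a34, hd4'⟩ := exists_adj_dist_succ (show 1 ≤ G.dist v3 b by omega)
  have hr4b : G.Reachable v4 b := a34.symm.reachable.trans hr3b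
  have m1 : v1 ∈ C₁.supp := hcl m0 a01
  have m2 : v2 ∈ C₁.supp := hcl m1 a12
  have m3 : v3 ∈ C₁.supp := hcl m2 a23
  have m4 : v4 ∈ C₁.supp := hcl m3 a34
  have r02 : G.Reachable v0 v2 := a01.reachable.trans a12.reachable
  have r13 : G.Reachable v1 v3 := a12.reachable.trans a23.reachable
  have r03 : G.Reachable v0 v3 := r02.trans a23.reachable
  have r04 : G.Reachable v0 v4 := r03.trans a34.reachable
  have r14 : G.Reachable v1 v4 := r13.trans a34.reachable
  have t02 : G.dist v0 b ≤ G.dist v0 v2 + G.dist v2 b := dist_triangle' r02 hr2b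
  have t13 : G.dist v1 b ≤ G.dist v1 v3 + G.dist v3 b := dist_triangle' r13 hr3b
  have t03 : G.dist v0 b ≤ G.dist v0 v3 + G.dist v3 b := dist_triangle' r03 hr3b
  have t04 : G.dist v0 b ≤ G.dist v0 v4 + G.dist v4 b := dist_triangle' r04 hr4b
  have t14 : G.dist v1 b ≤ G.dist v1 v4 + G.dist v4 b := dist_triangle' r14 hr4b
  have nadj02 : ¬ G.Adj v0 v2 := by
    intro h
    have e := SimpleGraph.dist_eq_one_iff_adj.mpr h
    omega
  have nadj13 : ¬ G.Adj v1 v3 := by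
    intro h
    have e := SimpleGraph.dist_eq_one_iff_adj.mpr h
    omega
  have nadj03 : ¬ G.Adj v0 v3 := by
    intro h
    have e := SimpleGraph.dist_eq_one_iff_adj.mpr h
    omega
  have nadj04 : ¬ G.Adj v0 v4 := by
    intro h
    have e := SimpleGraph.dist_eq_one_iff_adj.mpr h
    omega
  have nadj14 : ¬ G.Adj v1 v4 := by
    intro h
    have e := SimpleGraph.dist_eq_one_iff_adj.mpr h
    omega
  have ne02 : v0 ≠ v2 := by
    intro h
    have e : G.dist v0 b = G.dist v2 b := by rw [h]
    omega
  have ne13 : v1 ≠ v3 := by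
    intro h
    have e : G.dist v1 b = G.dist v3 b := by rw [h]
    omega
  have ne03 : v0 ≠ v3 := by
    intro h
    have e : G.dist v0 b = G.dist v3 b := by rw [h]
    omega
  have ne04 : v0 ≠ v4 := by
    intro h
    have e : G.dist v0 b = G.dist v4 b := by rw [h]
    omega
  have ne14 : v1 ≠ v4 := by
    intro h
    have e : G.dist v1 b = G.dist v4 b := by rw [h]
    omega
  have nocommon03 : ∀ c, ¬(G.Adj v0 c ∧ G.Adj c v3) := by
    rintro c ⟨h1, h2⟩
    have e1 := SimpleGraph.dist_eq_one_iff_adj.mpr h1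
    have e2 := SimpleGraph.dist_eq_one_iff_adj.mpr h2
    have tA : G.dist v0 v3 ≤ G.dist v0 c + G.dist c v3 :=
      dist_triangle' h1.reachable h2.reachable
    omega
  have nocommon04 : ∀ c, ¬(G.Adj v0 c ∧ G.Adj c v4) := by
    rintro c ⟨h1, h2⟩
    have e1 := SimpleGraph.dist_eq_one_iff_adj.mpr h1
    have e2 := SimpleGraph.dist_eq_one_iff_adj.mpr h2
    have tA : G.dist v0 v4 ≤ G.dist v0 c + G.dist c v4 :=
      dist_triangle' h1.reachable h2.reachable
    omega
  have nocommon14 : ∀ c, ¬(G.Adj v1 c ∧ G.Adj c v4) := by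
    rintro c ⟨h1, h2⟩
    have e1 := SimpleGraph.dist_eq_one_iff_adj.mpr h1
    have e2 := SimpleGraph.dist_eq_one_iff_adj.mpr h2
    have tA : G.dist v1 v4 ≤ G.dist v1 c + G.dist c v4 :=
      dist_triangle' h1.reachable h2.reachable
    omega
  -- the isolated vertex w₀
  have hnonempty : Nonempty {C : G.ConnectedComponent // ¬ C.supp.Nontrivial} := by
    rw [ht] at ht0
    exact (Nat.card_pos_iff.mp ht0).1
  obtain ⟨⟨C, hC⟩⟩ := hnonempty
  obtain ⟨w₀, hw₀⟩ := C.exists_rep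
  have hw0 : w₀ ∉ C₁.supp := by
    intro h
    have h1 : G.connectedComponentMk w₀ = C₁ := (C₁.mem_supp_iff w₀).mp h
    have h2 : C = C₁ := hw₀.symm.trans h1
    rw [h2] at hC
    exact hC hC₁
  have hw0iso : ∀ y, ¬ G.Adj w₀ y := hiso w₀ hw0
  -- the hull set
  set S : Set (V ⊕ V) :=
    (Sum.inl '' (C₁.suppᶜ : Set V)) ∪ {Sum.inl v0, Sum.inl v3} with hSdef
  have hhull : IsHullSet (compPrism G) S := by
    rw [IsHullSet]
    rw [Set.eq_univ_iff_forall]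
    intro x
    rw [geoHull, Set.mem_sInter]
    rintro T ⟨hconv, hST⟩
    have reachLL : ∀ a c : V, (compPrism G).Reachable (.inl a) (.inl c) := by
      intro a c
      by_cases h : a = c
      · rw [h]
      · by_cases hadj : G.Adj a c
        · exact (cp_adj_ll.mpr hadj).reachable
        · have h1 : (compPrism G).Adj (.inl a) (.inr a) := by simp
          have h2 : (compPrism G).Adj (.inr a) (.inr c) := by simp [h, hadj]
          have h3 : (compPrism G).Adj (.inr c) (.inl c) := by simp
          exact (h1.reachable.trans h2.reachable).trans h3.reachable
    have reachAll : ∀ a c : V ⊕ V, (compPrism G).Reachable a c := by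
      rintro (a | a) (c | c)
      · exact reachLL a c
      · exact (reachLL a c).trans
          ((show (compPrism G).Adj (.inl c) (.inr c) by simp).reachable)
      · exact ((show (compPrism G).Adj (.inr a) (.inl a) by simp).reachable).trans (reachLL a c)
      · exact ((show (compPrism G).Adj (.inr a) (.inl a) by simp).reachable).trans
          ((reachLL a c).trans ((show (compPrism G).Adj (.inl c) (.inr c) by simp).reachable))
    have mem3 : ∀ {p q r : V ⊕ V}, p ∈ T → q ∈ T →
        (compPrism G).dist p r + (compPrism G).dist r q = (compPrism G).dist p q → r ∈ T :=
      fun hp hq heq => hconv _ hp _ hq (Or.inr (Or.inr ⟨reachAll _ _, heq⟩))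
    have hT0 : Sum.inl v0 ∈ T := hST (Set.mem_union_right _ (Set.mem_insert _ _))
    have hT3 : Sum.inl v3 ∈ T := hST (Set.mem_union_right _ (Set.mem_insert_of_mem _ rfl))
    have hTiso : ∀ z, z ∉ C₁.supp → Sum.inl z ∈ T :=
      fun z hz => hST (Set.mem_union_left _ ⟨z, hz, rfl⟩)
    have hw0v0 : w₀ ≠ v0 := fun h => hw0 (h ▸ m0)
    have hTrw0 : Sum.inr w₀ ∈ T := by
      refine mem3 (hTiso w₀ hw0) hT0 ?_
      have e1 : (compPrism G).dist (.inl w₀) (.inr w₀) = 1 :=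
        SimpleGraph.dist_eq_one_iff_adj.mpr (by simp)
      have e2 : (compPrism G).dist (.inr w₀) (.inl v0) = 2 := by
        rw [SimpleGraph.dist_comm]
        exact cp_dist_lr (Ne.symm hw0v0)
      have e3 : (compPrism G).dist (.inl w₀) (.inl v0) = 3 :=
        cp_dist_ll_three hw0v0 (hw0iso v0) (fun c hc => hw0iso c hc.1)
      rw [e1, e2, e3]
    have stepE : ∀ x : V, x ≠ w₀ → Sum.inl x ∈ T → Sum.inr x ∈ T := by
      intro x hx hxT
      refine mem3 hxT hTrw0 ?_
      have e1 : (compPrism G).dist (.inl x) (.inr x) = 1 :=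
        SimpleGraph.dist_eq_one_iff_adj.mpr (by simp)
      have e2 : (compPrism G).dist (.inr x) (.inr w₀) = 1 :=
        SimpleGraph.dist_eq_one_iff_adj.mpr
          (by simp only [cp_adj_rr]; exact ⟨hx, fun h => hw0iso x h.symm⟩)
      have e3 : (compPrism G).dist (.inl x) (.inr w₀) = 2 := cp_dist_lr hx
      rw [e1, e2, e3]
    have stepD : ∀ x y : V, G.Adj x y → Sum.inl x ∈ T → Sum.inr y ∈ T → Sum.inl y ∈ T := by
      intro x y hxy hxT hyT
      refine mem3 hxT hyT ?_
      have e1 : (compPrism G).dist (.inl x) (.inl y) = 1 :=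
        SimpleGraph.dist_eq_one_iff_adj.mpr (by simp [hxy])
      have e2 : (compPrism G).dist (.inl y) (.inr y) = 1 :=
        SimpleGraph.dist_eq_one_iff_adj.mpr (by simp)
      have e3 : (compPrism G).dist (.inl x) (.inr y) = 2 := cp_dist_lr hxy.ne
      rw [e1, e2, e3]
    have stepC : ∀ x y z : V, G.Adj x y → Sum.inr x ∈ T → Sum.inr y ∈ T →
        z ≠ x → z ≠ y → ¬ G.Adj z x → ¬ G.Adj z y → Sum.inr z ∈ T := by
      intro x y z hxy hxT hyT hzx hzy hax hay
      refine mem3 hxT hyT ?_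
      have e1 : (compPrism G).dist (.inr x) (.inr z) = 1 :=
        SimpleGraph.dist_eq_one_iff_adj.mpr
          (by simp only [cp_adj_rr]; exact ⟨hzx.symm, fun h => hax h.symm⟩)
      have e2 : (compPrism G).dist (.inr z) (.inr y) = 1 :=
        SimpleGraph.dist_eq_one_iff_adj.mpr (by simp only [cp_adj_rr]; exact ⟨hzy, hay⟩)
      have e3 : (compPrism G).dist (.inr x) (.inr y) = 2 := cp_dist_rr_two hxy hw0iso
      rw [e1, e2, e3]
    have hTl1 : Sum.inl v1 ∈ T := by
      refine mem3 hT0 hT3 ?_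
      have e1 : (compPrism G).dist (.inl v0) (.inl v1) = 1 :=
        SimpleGraph.dist_eq_one_iff_adj.mpr (by simp [a01])
      have e2 : (compPrism G).dist (.inl v1) (.inl v3) = 2 :=
        cp_dist_ll_two ne13 nadj13 a12 a23
      have e3 : (compPrism G).dist (.inl v0) (.inl v3) = 3 :=
        cp_dist_ll_three ne03 nadj03 nocommon03
      rw [e1, e2, e3]
    have hTl2 : Sum.inl v2 ∈ T := by
      refine mem3 hT0 hT3 ?_
      have e1 : (compPrism G).dist (.inl v0) (.inl v2) = 2 :=
        cp_dist_ll_two ne02 nadj02 a01 a12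
      have e2 : (compPrism G).dist (.inl v2) (.inl v3) = 1 :=
        SimpleGraph.dist_eq_one_iff_adj.mpr (by simp [a23])
      have e3 : (compPrism G).dist (.inl v0) (.inl v3) = 3 :=
        cp_dist_ll_three ne03 nadj03 nocommon03
      rw [e1, e2, e3]
    have hTr0 : Sum.inr v0 ∈ T := stepE v0 (Ne.symm hw0v0) hT0
    have hTr1 : Sum.inr v1 ∈ T := stepE v1 (fun h => hw0 ((Eq.symm h) ▸ m1)) hTl1
    have hTr2 : Sum.inr v2 ∈ T := stepE v2 (fun h => hw0 ((Eq.symm h) ▸ m2)) hTl2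
    have hTr3 : Sum.inr v3 ∈ T := stepE v3 (fun h => hw0 ((Eq.symm h) ▸ m3)) hT3
    have hTr4 : Sum.inr v4 ∈ T :=
      stepC v0 v1 v4 a01 hTr0 hTr1 ne04.symm ne14.symm
        (fun h => nadj04 h.symm) (fun h => nadj14 h.symm)
    have claimR : ∀ z : V, Sum.inr z ∈ T := by
      intro z
      by_cases hzC : z ∈ C₁.supp
      · rcases eq_or_ne z v0 with rfl | h0
        · exact hTr0
        rcases eq_or_ne z v1 with rfl | h1
        · exact hTr1
        rcases eq_or_ne z v2 with rfl | h2
        · exact hTr2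
        rcases eq_or_ne z v3 with rfl | h3
        · exact hTr3
        rcases eq_or_ne z v4 with rfl | h4
        · exact hTr4
        by_cases p0 : ¬ G.Adj z v0 ∧ ¬ G.Adj z v1
        · exact stepC v0 v1 z a01 hTr0 hTr1 h0 h1 p0.1 p0.2
        by_cases p1 : ¬ G.Adj z v1 ∧ ¬ G.Adj z v2
        · exact stepC v1 v2 z a12 hTr1 hTr2 h1 h2 p1.1 p1.2
        by_cases p2 : ¬ G.Adj z v2 ∧ ¬ G.Adj z v3
        · exact stepC v2 v3 z a23 hTr2 hTr3 h2 h3 p2.1 p2.2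
        by_cases p3 : ¬ G.Adj z v3 ∧ ¬ G.Adj z v4
        · exact stepC v3 v4 z a34 hTr3 hTr4 h3 h4 p3.1 p3.2
        rw [not_and_or, not_not, not_not] at p0 p1 p2 p3
        have hz0 : ¬ G.Adj z v0 := by
          intro h
          rcases p3 with h3' | h4'
          · exact nocommon03 z ⟨h.symm, h3'⟩
          · exact nocommon04 z ⟨h.symm, h4'⟩
        have hz1 : G.Adj z v1 := p0.resolve_left hz0
        have hz3 : G.Adj z v3 := by
          rcases p3 with h3' | h4'
          · exact h3'
          · exact absurd ⟨hz1.symm, h4'⟩ (nocommon14 z)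
        have hTlz : Sum.inl z ∈ T := by
          refine mem3 hT0 hT3 ?_
          have e1 : (compPrism G).dist (.inl v0) (.inl z) = 2 :=
            cp_dist_ll_two (Ne.symm h0) (fun h => hz0 h.symm) a01 hz1.symm
          have e2 : (compPrism G).dist (.inl z) (.inl v3) = 1 :=
            SimpleGraph.dist_eq_one_iff_adj.mpr (by simp [hz3])
          have e3 : (compPrism G).dist (.inl v0) (.inl v3) = 3 :=
            cp_dist_ll_three ne03 nadj03 nocommon03
          rw [e1, e2, e3]
        exact stepE z (fun h => hw0 (h ▸ hzC)) hTlz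
      · rcases eq_or_ne z w₀ with rfl | hzw
        · exact hTrw0
        · exact stepE z hzw (hTiso z hzC)
    have claimL : ∀ z, z ∈ C₁.supp → Sum.inl z ∈ T := by
      have main : ∀ n, ∀ z, z ∈ C₁.supp → G.dist v0 z = n → Sum.inl z ∈ T := by
        intro n
        induction n using Nat.strong_induction_on with
        | _ n ih =>
          intro z hz hdz
          have hrz : G.Reachable v0 z := ConnectedComponent.exact
            (((C₁.mem_supp_iff v0).mp m0).trans (((C₁.mem_supp_iff z).mp hz)).symm)
          cases n with
          | zero =>
            have hv0z : v0 = z := (hrz.dist_eq_zero_iff).mp hdz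
            rw [← hv0z]
            exact hT0
          | succ n =>
            have c1 : G.dist z v0 = G.dist v0 z := SimpleGraph.dist_comm
            obtain ⟨y, hzy, hdy⟩ := exists_adj_dist_succ
              (show 1 ≤ G.dist z v0 by omega)
            have hyC : y ∈ C₁.supp := hcl hz hzy
            have c2 : G.dist v0 y = G.dist y v0 := SimpleGraph.dist_comm
            have hTy : Sum.inl y ∈ T := ih n (Nat.lt_succ_self n) y hyC (by omega)
            exact stepD y z hzy.symm hTy (claimR z)
      intro z hz
      exact main _ z hz rfl
    rcases x with z | z
    · by_cases hz : z ∈ C₁.supp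
      · exact claimL z hz
      · exact hTiso z hz
    · exact claimR z
  -- cardinality
  have h2 : (C₁.suppᶜ : Set V).ncard = t := by
    rw [ht, ← Nat.card_coe_set_eq]
    let f : (C₁.suppᶜ : Set V) → {C : G.ConnectedComponent // ¬ C.supp.Nontrivial} :=
      fun z => ⟨G.connectedComponentMk z,
        fun hnt => z.2 ((C₁.mem_supp_iff (z : V)).mpr (huniq _ hnt))⟩
    have hfbij : Function.Bijective f := by
      constructor
      · rintro ⟨z, hz⟩ ⟨z', hz'⟩ h
        have hCeq : G.connectedComponentMk z = G.connectedComponentMk z' :=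
          congrArg Subtype.val h
        have hns : ¬ (G.connectedComponentMk z).supp.Nontrivial :=
          fun hnt => hz ((C₁.mem_supp_iff z).mpr (huniq _ hnt))
        have hzs : z ∈ (G.connectedComponentMk z).supp := by
          rw [ConnectedComponent.mem_supp_iff]
        have hz's : z' ∈ (G.connectedComponentMk z).supp := by
          rw [ConnectedComponent.mem_supp_iff, hCeq]
        exact Subtype.ext ((Set.not_nontrivial_iff.mp hns) hzs hz's)
      · rintro ⟨C', hC'⟩
        obtain ⟨z, hz⟩ := C'.exists_rep
        refine ⟨⟨z, fun hmem => ?_⟩, ?_⟩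
        · have hzz : G.connectedComponentMk z = C₁ := (C₁.mem_supp_iff z).mp hmem
          have : C' = C₁ := hz.symm.trans hzz
          rw [this] at hC'
          exact hC' hC₁
        · exact Subtype.ext hz
    exact Nat.card_eq_of_bijective f hfbij
  have hcard : S.ncard ≤ t + 2 := by
    have h1 : (Sum.inl '' (C₁.suppᶜ : Set V) : Set (V ⊕ V)).ncard
        = (C₁.suppᶜ : Set V).ncard :=
      Set.ncard_image_of_injective _ Sum.inl_injective
    have h3 : ({Sum.inl v0, Sum.inl v3} : Set (V ⊕ V)).ncard ≤ 2 := by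
      refine le_trans (Set.ncard_insert_le _ _) ?_
      simp [Set.ncard_singleton]
    calc S.ncard ≤ (Sum.inl '' (C₁.suppᶜ : Set V) : Set (V ⊕ V)).ncard
          + ({Sum.inl v0, Sum.inl v3} : Set (V ⊕ V)).ncard := Set.ncard_union_le _ _
      _ ≤ t + 2 := by rw [h1, h2]; omega
  have hle : hullNumber (compPrism G) ≤ S.ncard :=
    Nat.sInf_le ⟨S, rfl, hhull⟩
  exact le_trans hle hcard
end
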